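/- Let Ω be a p×p symmetric positive definite matrix, P a p×p orthogonal projection, ν > 0, Ω̃ = Ω + ν(I−P), and m̃ = Ω̃^{-1}Ωm for m ∈ ℝ^p. Then m'Ωm − m̃'Ω̃m̃ ≥ 0, with equality if and only if ν·(I−P)m̃ = 0. -/

import Mathlib

open Matrix

theorem quadratic_form_reduction (p : ℕ) (Ω : Matrix (Fin p) (Fin p) ℝ) (hΩ : Ω.PosDef)
    (P : Matrix (Fin p) (Fin p) ℝ) (hsymm : P.IsSymm) (hidem : P * P = P)
    (ν : ℝ) (hν : 0 < ν) (m : Fin p → ℝ)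
    (Ωt : Matrix (Fin p) (Fin p) ℝ) (hΩt : Ωt = Ω + ν • (1 - P))
    (mt : Fin p → ℝ) (hmt : mt = Ωt⁻¹ *ᵥ (Ω *ᵥ m)) :
    0 ≤ (m ⬝ᵥ (Ω *ᵥ m)) - (mt ⬝ᵥ (Ωt *ᵥ mt)) ∧
    ((m ⬝ᵥ (Ω *ᵥ m)) - (mt ⬝ᵥ (Ωt *ᵥ mt)) = 0 ↔ ν • ((1 - P) *ᵥ mt) = 0) := by
  set Q : Matrix (Fin p) (Fin p) ℝ := 1 - P with hQ
  have hQsymm : Qᵀ = Q := by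
    simp [hQ, transpose_sub, hsymm.eq]
  have hQQ : Q * Q = Q := by
    simp only [hQ, mul_sub, sub_mul, one_mul, mul_one, hidem]
    abel
  -- quadratic form of Q is a square
  have hquad : ∀ x : Fin p → ℝ, x ⬝ᵥ (Q *ᵥ x) = (Q *ᵥ x) ⬝ᵥ (Q *ᵥ x) := by
    intro x
    conv_lhs => rw [← hQQ, ← mulVec_mulVec, dotProduct_mulVec]
    congr 1
    rw [← mulVec_transpose, hQsymm]
  have hdot_nonneg : ∀ v : Fin p → ℝ, 0 ≤ v ⬝ᵥ v := fun v =>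
    Finset.sum_nonneg fun i _ => mul_self_nonneg _
  have hQpsd : Q.PosSemidef := by
    refine posSemidef_iff_dotProduct_mulVec.mpr ⟨Matrix.IsHermitian.ext fun i j => ?_, fun x => ?_⟩
    · have := congrFun (congrFun hQsymm i) j
      simpa [Matrix.conjTranspose_apply, Matrix.transpose_apply] using this
    · simpa [hquad x] using hdot_nonneg (Q *ᵥ x)
  have hνQpsd : (ν • Q).PosSemidef := by
    refine posSemidef_iff_dotProduct_mulVec.mpr ⟨?_, fun x => ?_⟩
    · show (ν • Q)ᴴ = ν • Q
      rw [conjTranspose_smul, hQpsd.1.eq]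
      simp
    · rw [smul_mulVec, dotProduct_smul]
      exact smul_nonneg hν.le (hQpsd.dotProduct_mulVec_nonneg x)
  have hΩtpd : Ωt.PosDef := by
    rw [hΩt]
    exact hΩ.add_posSemidef hνQpsd
  -- Ωt *ᵥ mt = Ω *ᵥ m
  have hinv : Ωt * Ωt⁻¹ = 1 := Matrix.mul_nonsing_inv _ hΩtpd.det_pos.ne'.isUnit
  have key : Ωt *ᵥ mt = Ω *ᵥ m := by
    rw [hmt, mulVec_mulVec, hinv, one_mulVec]
  -- u := m - mt,  Ω *ᵥ u = ν • (Q *ᵥ mt)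
  set u : Fin p → ℝ := m - mt with hu
  have hΩu : Ω *ᵥ u = ν • (Q *ᵥ mt) := by
    have h1 : Ω *ᵥ m = Ω *ᵥ mt + ν • (Q *ᵥ mt) := by
      rw [← key, hΩt, add_mulVec, smul_mulVec]
    rw [hu, mulVec_sub, h1]
    abel
  have hΩsymm : Ωᵀ = Ω := by simpa using hΩ.isHermitian.eq
  -- decomposition of the difference
  have hdec : (m ⬝ᵥ (Ω *ᵥ m)) - (mt ⬝ᵥ (Ωt *ᵥ mt))
      = u ⬝ᵥ (Ω *ᵥ u) + ν * ((Q *ᵥ mt) ⬝ᵥ (Q *ᵥ mt)) := by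
    have h2 : mt ⬝ᵥ (Ωt *ᵥ mt) = mt ⬝ᵥ (Ω *ᵥ m) := by rw [key]
    have hm : m = u + mt := by rw [hu]; abel
    have huΩmt : u ⬝ᵥ (Ω *ᵥ mt) = ν * ((Q *ᵥ mt) ⬝ᵥ (Q *ᵥ mt)) := by
      rw [dotProduct_mulVec, ← mulVec_transpose, hΩsymm, hΩu, smul_dotProduct,
        ← hquad, dotProduct_mulVec, ← mulVec_transpose, hQsymm, smul_eq_mul]
    calc (m ⬝ᵥ (Ω *ᵥ m)) - (mt ⬝ᵥ (Ωt *ᵥ mt))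
        = (m - mt) ⬝ᵥ (Ω *ᵥ m) := by rw [h2, sub_dotProduct]
      _ = u ⬝ᵥ (Ω *ᵥ (u + mt)) := by rw [← hu, ← hm]
      _ = u ⬝ᵥ (Ω *ᵥ u) + u ⬝ᵥ (Ω *ᵥ mt) := by rw [mulVec_add, dotProduct_add]
      _ = _ := by rw [huΩmt]
  have h1nn : 0 ≤ u ⬝ᵥ (Ω *ᵥ u) := by simpa using hΩ.posSemidef.dotProduct_mulVec_nonneg u
  have h2nn : 0 ≤ ν * ((Q *ᵥ mt) ⬝ᵥ (Q *ᵥ mt)) :=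
    mul_nonneg hν.le (hdot_nonneg _)
  refine ⟨by rw [hdec]; exact add_nonneg h1nn h2nn, ?_, ?_⟩
  · intro h0
    rw [hdec] at h0
    have hterm2 : ν * ((Q *ᵥ mt) ⬝ᵥ (Q *ᵥ mt)) = 0 := le_antisymm (by linarith) h2nn
    have hQmt : Q *ᵥ mt = 0 :=
      dotProduct_self_eq_zero.mp ((mul_eq_zero.mp hterm2).resolve_left hν.ne')
    rw [hQmt, smul_zero]
  · intro h
    have hQmt : Q *ᵥ mt = 0 := by
      rcases smul_eq_zero.mp h with h' | h'
      · exact absurd h' hν.ne'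
      · exact h'
    have hu0 : u = 0 := by
      have hΩu0 : Ω *ᵥ u = 0 := by rw [hΩu, hQmt, smul_zero]
      have hinj : Function.Injective (Ω.mulVec) :=
        Matrix.mulVec_injective_iff_isUnit.mpr hΩ.isUnit
      exact hinj (by rw [hΩu0, mulVec_zero])
    rw [hdec, hu0, hQmt]
    simp
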